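/- (Supercritical Morrey value of the oscillating stationary profile in intermediate dimensions.) Let d be an integer with 5 ≤ d ≤ 12 and set τ := −(d−4)/2. Let φ : [0,∞) → ℝ be continuous and suppose there exist real numbers C₀ ≠ 0, k₀ ≠ 0, k₁, C₁, ν < 2−d, R₁ ≥ 1 and C' > 0 such that for all r ≥ R₁: |φ(r) + 4·log r − log(8(d−4)(d−2)) − C₀·r^{τ}·sin(k₀·log r + k₁) − C₁·r^{ν}| ≤ C'·r^{2τ}. Then lim_{R→∞} R^{4−d}·∫_0^R r^{d−1}·e^{φ(r)} dr = 8(d−2), the quantity R^{4−d}·∫_0^R r^{d−1}·e^{φ(r)} dr exceeds 8(d−2) for arbitrarily large R, and consequently sup_{R>0} R^{4−d}·∫_0^R r^{d−1}·e^{φ(r)} dr is finite and strictly greater than 8(d−2). -/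

import Mathlib

open Real Filter MeasureTheory Set intervalIntegral

private lemma osc_deriv (α k₀ k₁ : ℝ) (hk₀ : k₀ ≠ 0) {r : ℝ} (hr : 0 < r) :
    HasDerivAt (fun x : ℝ => x ^ α * (α * Real.sin (k₀ * Real.log x + k₁)
        - k₀ * Real.cos (k₀ * Real.log x + k₁)) / (α ^ 2 + k₀ ^ 2))
      (r ^ (α - 1) * Real.sin (k₀ * Real.log r + k₁)) r := by
  have hlog : HasDerivAt (fun x : ℝ => k₀ * Real.log x + k₁) (k₀ * r⁻¹) r :=
    ((Real.hasDerivAt_log hr.ne').const_mul k₀).add_const k₁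
  have hsin : HasDerivAt (fun x : ℝ => Real.sin (k₀ * Real.log x + k₁))
      (Real.cos (k₀ * Real.log r + k₁) * (k₀ * r⁻¹)) r :=
    (Real.hasDerivAt_sin _).comp r hlog
  have hcos : HasDerivAt (fun x : ℝ => Real.cos (k₀ * Real.log x + k₁))
      (-Real.sin (k₀ * Real.log r + k₁) * (k₀ * r⁻¹)) r :=
    (Real.hasDerivAt_cos _).comp r hlog
  have hpow : HasDerivAt (fun x : ℝ => x ^ α) (α * r ^ (α - 1)) r :=
    Real.hasDerivAt_rpow_const (Or.inl hr.ne')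
  have h := ((hpow.mul ((hsin.const_mul α).sub (hcos.const_mul k₀)))).div_const (α ^ 2 + k₀ ^ 2)
  refine h.congr_deriv ?_
  have hne : α ^ 2 + k₀ ^ 2 ≠ 0 := by positivity
  have hra : r ^ (α - 1) = r ^ α * r⁻¹ := by
    rw [Real.rpow_sub hr, Real.rpow_one, div_eq_mul_inv]
  set s := Real.sin (k₀ * Real.log r + k₁)
  set c := Real.cos (k₀ * Real.log r + k₁)
  have key : (α * r ^ (α - 1) * (α * s - k₀ * c)
      + r ^ α * (α * (c * (k₀ * r⁻¹)) - k₀ * (-s * (k₀ * r⁻¹))))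
      = r ^ (α - 1) * s * (α ^ 2 + k₀ ^ 2) := by
    rw [hra]; ring
  show (α * r ^ (α - 1) * (α * s - k₀ * c) + r ^ α * (α * (c * (k₀ * r⁻¹)) - k₀ * (-s * (k₀ * r⁻¹)))) / (α ^ 2 + k₀ ^ 2) = _
  rw [key, mul_div_assoc, div_self hne, mul_one]

private lemma exists_resonant (k₀ θs k₁ : ℝ) (hk₀ : k₀ ≠ 0) (T : ℝ) :
    ∃ t : ℝ, T ≤ t ∧ ∃ n : ℤ, k₀ * t + k₁ = θs + n * (2 * Real.pi) := by
  have hπ : (0 : ℝ) < 2 * Real.pi := by positivity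
  rcases hk₀.lt_or_gt with hneg | hpos
  · refine ⟨(θs + ⌊(k₀ * T + k₁ - θs) / (2 * Real.pi)⌋ * (2 * Real.pi) - k₁) / k₀, ?_,
      ⟨⌊(k₀ * T + k₁ - θs) / (2 * Real.pi)⌋, by field_simp; ring⟩⟩
    rw [le_div_iff_of_neg hneg]
    have h1 : (⌊(k₀ * T + k₁ - θs) / (2 * Real.pi)⌋ : ℝ) * (2 * Real.pi)
        ≤ ((k₀ * T + k₁ - θs) / (2 * Real.pi)) * (2 * Real.pi) :=
      mul_le_mul_of_nonneg_right (Int.floor_le _) hπ.le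
    rw [div_mul_cancel₀ _ hπ.ne'] at h1
    linarith
  · refine ⟨(θs + ⌈(k₀ * T + k₁ - θs) / (2 * Real.pi)⌉ * (2 * Real.pi) - k₁) / k₀, ?_,
      ⟨⌈(k₀ * T + k₁ - θs) / (2 * Real.pi)⌉, by field_simp; ring⟩⟩
    rw [le_div_iff₀ hpos]
    have h1 : ((k₀ * T + k₁ - θs) / (2 * Real.pi)) * (2 * Real.pi)
        ≤ (⌈(k₀ * T + k₁ - θs) / (2 * Real.pi)⌉ : ℝ) * (2 * Real.pi) :=
      mul_le_mul_of_nonneg_right (Int.le_ceil _) hπ.le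
    rw [div_mul_cancel₀ _ hπ.ne'] at h1
    linarith

set_option maxHeartbeats 1600000 in
/-- Supercritical Morrey value of the oscillating stationary profile
in intermediate dimensions `5 ≤ d ≤ 12`: the Morrey quantity
`R^{4−d} ∫_0^R r^{d−1} e^{φ(r)} dr` tends to `8(d−2)`, exceeds `8(d−2)` for
arbitrarily large `R`, and its supremum over `R > 0` is finite and `> 8(d−2)`. -/
theorem stmt19 (d : ℕ) (hd5 : 5 ≤ d) (hd12 : d ≤ 12) (τ : ℝ)
    (hτ : τ = -(((d : ℝ) - 4) / 2))
    (φ : ℝ → ℝ) (hφ_cont : ContinuousOn φ (Set.Ici 0))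
    (C₀ k₀ k₁ C₁ ν R₁ C' : ℝ)
    (hC₀ : C₀ ≠ 0) (hk₀ : k₀ ≠ 0) (hν : ν < 2 - (d : ℝ)) (hR₁ : 1 ≤ R₁) (hC' : 0 < C')
    (hexp : ∀ r : ℝ, R₁ ≤ r →
      |φ r + 4 * Real.log r - Real.log (8 * ((d : ℝ) - 4) * ((d : ℝ) - 2))
          - C₀ * r ^ τ * Real.sin (k₀ * Real.log r + k₁) - C₁ * r ^ ν|
        ≤ C' * r ^ (2 * τ)) :
    Filter.Tendsto
      (fun R : ℝ => R ^ ((4 : ℝ) - (d : ℝ)) * ∫ r in (0 : ℝ)..R, r ^ (d - 1) * Real.exp (φ r))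
      Filter.atTop (nhds (8 * ((d : ℝ) - 2))) ∧
    (∃ᶠ R in Filter.atTop,
      8 * ((d : ℝ) - 2)
        < R ^ ((4 : ℝ) - (d : ℝ)) * ∫ r in (0 : ℝ)..R, r ^ (d - 1) * Real.exp (φ r)) ∧
    BddAbove ((fun R : ℝ =>
      R ^ ((4 : ℝ) - (d : ℝ)) * ∫ r in (0 : ℝ)..R, r ^ (d - 1) * Real.exp (φ r)) ''
        Set.Ioi 0) ∧
    8 * ((d : ℝ) - 2) < sSup ((fun R : ℝ =>
      R ^ ((4 : ℝ) - (d : ℝ)) * ∫ r in (0 : ℝ)..R, r ^ (d - 1) * Real.exp (φ r)) ''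
        Set.Ioi 0) := by
  classical
  have hD5 : (5 : ℝ) ≤ (d : ℝ) := by exact_mod_cast hd5
  set Dr : ℝ := (d : ℝ) with hDrdef
  set α : ℝ := (Dr - 4) / 2 with hαdef
  have hα : 0 < α := by rw [hαdef]; linarith
  have hα2 : (1 : ℝ) / 2 ≤ α := by rw [hαdef]; linarith
  have hτα : τ = -α := by rw [hτ]
  set A : ℝ := 8 * (Dr - 4) * (Dr - 2) with hAdef
  have hA : 0 < A := by rw [hAdef]; nlinarith
  set L : ℝ := 8 * (Dr - 2) with hLdef
  have hL : 0 < L := by rw [hLdef]; linarith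
  have h4ne : Dr - 4 ≠ 0 := sub_ne_zero.mpr (by linarith)
  have hLA : L = A / (Dr - 4) := by
    rw [hLdef, hAdef, eq_div_iff h4ne]; ring
  set ψ : ℝ → ℝ := fun r => φ r + 4 * Real.log r - Real.log A with hψdef
  set f : ℝ → ℝ := fun r => r ^ (d - 1) * Real.exp (φ r) with hfdef
  set F : ℝ → ℝ := fun R : ℝ => R ^ ((4 : ℝ) - Dr) * ∫ r in (0 : ℝ)..R, f r with hFdef
  have hexp' : ∀ r : ℝ, R₁ ≤ r →
      |ψ r - C₀ * r ^ τ * Real.sin (k₀ * Real.log r + k₁) - C₁ * r ^ ν|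
        ≤ C' * r ^ (2 * τ) := hexp
  have hf_cont : ContinuousOn f (Set.Ici 0) := by
    exact (continuous_pow (d - 1)).continuousOn.mul
      (Real.continuous_exp.comp_continuousOn hφ_cont)
  have hf_int : ∀ a b : ℝ, 0 ≤ a → 0 ≤ b → IntervalIntegrable f volume a b := by
    intro a b ha hb
    refine (hf_cont.mono ?_).intervalIntegrable
    intro x hx
    rcases Set.mem_uIcc.mp hx with h | h
    · exact le_trans ha h.1
    · exact le_trans hb h.1
  -- key identity
  have hfid : ∀ r : ℝ, 0 < r → f r = A * r ^ (Dr - 5) * Real.exp (ψ r) := by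
    intro r hr
    have h1 : Real.exp (ψ r) = Real.exp (φ r) * r ^ (4 : ℝ) / A := by
      rw [hψdef]
      simp only []
      rw [Real.exp_sub, Real.exp_add, Real.exp_log hA]
      congr 2
      rw [Real.rpow_def_of_pos hr, mul_comm]
    have h2 : r ^ (d - 1) = r ^ (Dr - 1 : ℝ) := by
      rw [← Real.rpow_natCast r (d - 1)]
      congr 1
      rw [hDrdef, Nat.cast_sub (by omega : 1 ≤ d), Nat.cast_one]
    have h3 : r ^ (Dr - 5) * r ^ (4 : ℝ) = r ^ (Dr - 1 : ℝ) := by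
      rw [← Real.rpow_add hr]; congr 1; ring
    rw [hfdef]
    simp only []
    rw [h1, h2, ← h3]
    field_simp
  set D₀ : ℝ := |C₀| + |C₁| + C' with hD₀def
  have hD₀ : 0 < D₀ := by
    have := abs_nonneg C₀; have := abs_nonneg C₁; rw [hD₀def]; linarith
  set b₀ : ℝ := max R₁ (D₀ ^ 2 + 1) with hb₀def
  have hb₀R₁ : R₁ ≤ b₀ := le_max_left _ _
  have hb₀1 : 1 ≤ b₀ := le_trans hR₁ hb₀R₁
  have hb₀pos : 0 < b₀ := lt_of_lt_of_le one_pos hb₀1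
  -- rpow exponent arithmetic helpers
  have hrpow1 : ∀ r : ℝ, 0 < r → r ^ (Dr - 5) * r ^ (-α) = r ^ (α - 1) := by
    intro r hr; rw [← Real.rpow_add hr]; congr 1; rw [hαdef]; ring
  have hrpow2 : ∀ r : ℝ, 0 < r → r ^ (Dr - 5) * r ^ (-(2 * α)) = r⁻¹ := by
    intro r hr
    rw [← Real.rpow_add hr, show Dr - 5 + -(2 * α) = -1 by rw [hαdef]; ring,
      Real.rpow_neg_one]
  -- ψ bounds
  have hψ1 : ∀ r : ℝ, b₀ ≤ r → |ψ r| ≤ D₀ * r ^ (-α) := by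
    intro r hrb
    have hr1 : (1 : ℝ) ≤ r := le_trans hb₀1 hrb
    have hr0 : (0 : ℝ) < r := lt_of_lt_of_le one_pos hr1
    have hE := hexp' r (le_trans hb₀R₁ hrb)
    have h2τ : r ^ (2 * τ) ≤ r ^ (-α) :=
      Real.rpow_le_rpow_of_exponent_le hr1 (by rw [hτα]; linarith)
    have hντ : r ^ ν ≤ r ^ (-α) :=
      Real.rpow_le_rpow_of_exponent_le hr1 (by rw [hαdef]; linarith)
    have hsin : |Real.sin (k₀ * Real.log r + k₁)| ≤ 1 := abs_sin_le_one _
    have hpos : (0 : ℝ) ≤ r ^ (-α) := Real.rpow_nonneg hr0.le _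
    have hb1 : |C₀ * r ^ τ * Real.sin (k₀ * Real.log r + k₁)| ≤ |C₀| * r ^ (-α) := by
      rw [abs_mul, abs_mul, abs_of_nonneg (Real.rpow_nonneg hr0.le τ), hτα]
      calc |C₀| * r ^ (-α) * |Real.sin (k₀ * Real.log r + k₁)|
          ≤ |C₀| * r ^ (-α) * 1 :=
            mul_le_mul_of_nonneg_left hsin (by positivity)
        _ = |C₀| * r ^ (-α) := mul_one _
    have hb2 : |C₁ * r ^ ν| ≤ |C₁| * r ^ (-α) := by
      rw [abs_mul, abs_of_nonneg (Real.rpow_nonneg hr0.le ν)]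
      exact mul_le_mul_of_nonneg_left hντ (abs_nonneg _)
    have htri : |ψ r| ≤ |ψ r - C₀ * r ^ τ * Real.sin (k₀ * Real.log r + k₁) - C₁ * r ^ ν|
        + |C₀ * r ^ τ * Real.sin (k₀ * Real.log r + k₁)| + |C₁ * r ^ ν| := by
      calc |ψ r| = |(ψ r - C₀ * r ^ τ * Real.sin (k₀ * Real.log r + k₁) - C₁ * r ^ ν
              + C₀ * r ^ τ * Real.sin (k₀ * Real.log r + k₁)) + C₁ * r ^ ν| := by
            congr 1; ring
        _ ≤ |ψ r - C₀ * r ^ τ * Real.sin (k₀ * Real.log r + k₁) - C₁ * r ^ ν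
              + C₀ * r ^ τ * Real.sin (k₀ * Real.log r + k₁)| + |C₁ * r ^ ν| := abs_add_le _ _
        _ ≤ |ψ r - C₀ * r ^ τ * Real.sin (k₀ * Real.log r + k₁) - C₁ * r ^ ν|
              + |C₀ * r ^ τ * Real.sin (k₀ * Real.log r + k₁)| + |C₁ * r ^ ν| :=
            add_le_add_left (abs_add_le _ _) _
    have hC'b : C' * r ^ (2 * τ) ≤ C' * r ^ (-α) :=
      mul_le_mul_of_nonneg_left h2τ hC'.le
    rw [hD₀def]
    have hexpand : (|C₀| + |C₁| + C') * r ^ (-α)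
        = |C₀| * r ^ (-α) + |C₁| * r ^ (-α) + C' * r ^ (-α) := by ring
    rw [hexpand]
    linarith
  have hψ2 : ∀ r : ℝ, b₀ ≤ r → |ψ r| ≤ 1 := by
    intro r hrb
    have hr1 : (1 : ℝ) ≤ r := le_trans hb₀1 hrb
    have hr0 : (0 : ℝ) < r := lt_of_lt_of_le one_pos hr1
    have hrD : D₀ ^ 2 ≤ r := le_trans (by linarith [le_max_right R₁ (D₀ ^ 2 + 1)]) hrb
    have hD₀r : D₀ ≤ r ^ α := by
      have h1 : D₀ = (D₀ ^ 2) ^ ((1 : ℝ) / 2) := by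
        rw [← Real.rpow_natCast D₀ 2, ← Real.rpow_mul hD₀.le]
        norm_num
      have h2 : (D₀ ^ 2) ^ ((1 : ℝ) / 2) ≤ r ^ ((1 : ℝ) / 2) :=
        Real.rpow_le_rpow (by positivity) hrD (by norm_num)
      have h3 : r ^ ((1 : ℝ) / 2) ≤ r ^ α :=
        Real.rpow_le_rpow_of_exponent_le hr1 hα2
      linarith
    have hfin : D₀ * r ^ (-α) ≤ 1 := by
      have h4 : D₀ * r ^ (-α) ≤ r ^ α * r ^ (-α) :=
        mul_le_mul_of_nonneg_right hD₀r (Real.rpow_nonneg hr0.le _)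
      rwa [← Real.rpow_add hr0, add_neg_cancel, Real.rpow_zero] at h4
    exact le_trans (hψ1 r hrb) hfin
  set M₁ : ℝ := 2 * A * D₀ with hM₁def
  have hM₁ : 0 < M₁ := by rw [hM₁def]; positivity
  have hlev1 : ∀ r : ℝ, b₀ ≤ r → |f r - A * r ^ (Dr - 5)| ≤ M₁ * r ^ (α - 1) := by
    intro r hrb
    have hr0 : (0 : ℝ) < r := lt_of_lt_of_le hb₀pos hrb
    have he : f r - A * r ^ (Dr - 5) = A * r ^ (Dr - 5) * (Real.exp (ψ r) - 1) := by
      rw [hfid r hr0]; ring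
    have hAr : (0 : ℝ) < A * r ^ (Dr - 5) := by positivity
    rw [he, abs_mul, abs_of_pos hAr]
    have hexp1 : |Real.exp (ψ r) - 1| ≤ 2 * |ψ r| := Real.abs_exp_sub_one_le (hψ2 r hrb)
    calc A * r ^ (Dr - 5) * |Real.exp (ψ r) - 1|
        ≤ A * r ^ (Dr - 5) * (2 * (D₀ * r ^ (-α))) := by
          refine mul_le_mul_of_nonneg_left ?_ hAr.le
          calc |Real.exp (ψ r) - 1| ≤ 2 * |ψ r| := hexp1
            _ ≤ 2 * (D₀ * r ^ (-α)) := by linarith [hψ1 r hrb]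
      _ = M₁ * (r ^ (Dr - 5) * r ^ (-α)) := by rw [hM₁def]; ring
      _ = M₁ * r ^ (α - 1) := by rw [hrpow1 r hr0]
  set M₂ : ℝ := A * (D₀ ^ 2 + C' + |C₁|) with hM₂def
  have hM₂ : 0 < M₂ := by
    have := abs_nonneg C₁; rw [hM₂def]; positivity
  have hlev2 : ∀ r : ℝ, b₀ ≤ r →
      |f r - A * r ^ (Dr - 5)
          - A * C₀ * (r ^ (α - 1) * Real.sin (k₀ * Real.log r + k₁))| ≤ M₂ * r⁻¹ := by
    intro r hrb
    have hr0 : (0 : ℝ) < r := lt_of_lt_of_le hb₀pos hrb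
    have hr1 : (1 : ℝ) ≤ r := le_trans hb₀1 hrb
    have he : f r - A * r ^ (Dr - 5)
        - A * C₀ * (r ^ (α - 1) * Real.sin (k₀ * Real.log r + k₁))
        = A * r ^ (Dr - 5)
          * (Real.exp (ψ r) - 1 - C₀ * r ^ (-α) * Real.sin (k₀ * Real.log r + k₁)) := by
      rw [hfid r hr0, ← hrpow1 r hr0]; ring
    have hAr : (0 : ℝ) < A * r ^ (Dr - 5) := by positivity
    rw [he, abs_mul, abs_of_pos hAr]
    -- inner estimate
    have hE := hexp' r (le_trans hb₀R₁ hrb)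
    have hq : |Real.exp (ψ r) - 1 - ψ r| ≤ ψ r ^ 2 :=
      Real.abs_exp_sub_one_sub_id_le (hψ2 r hrb)
    have hψsq : ψ r ^ 2 ≤ D₀ ^ 2 * r ^ (-(2 * α)) := by
      have h1 : ψ r ^ 2 = |ψ r| ^ 2 := (sq_abs _).symm
      have h2 : |ψ r| ^ 2 ≤ (D₀ * r ^ (-α)) ^ 2 :=
        pow_le_pow_left₀ (abs_nonneg _) (hψ1 r hrb) 2
      have h4 : r ^ (-α) * r ^ (-α) = r ^ (-(2 * α)) := by
        rw [← Real.rpow_add hr0]; congr 1; ring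
      have h3 : (D₀ * r ^ (-α)) ^ 2 = D₀ ^ 2 * r ^ (-(2 * α)) := by
        calc (D₀ * r ^ (-α)) ^ 2 = D₀ ^ 2 * (r ^ (-α) * r ^ (-α)) := by ring
          _ = D₀ ^ 2 * r ^ (-(2 * α)) := by rw [h4]
      linarith [h1.le, h2, h3.le]
    have h2τ : r ^ (2 * τ) = r ^ (-(2 * α)) := by rw [hτα]; congr 1; ring
    have hνb : r ^ ν ≤ r ^ (-(2 * α)) := by
      refine Real.rpow_le_rpow_of_exponent_le hr1 ?_
      rw [hαdef]; linarith
    have hτeq : r ^ τ = r ^ (-α) := by rw [hτα]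
    have hinner : |Real.exp (ψ r) - 1 - C₀ * r ^ (-α) * Real.sin (k₀ * Real.log r + k₁)|
        ≤ (D₀ ^ 2 + C' + |C₁|) * r ^ (-(2 * α)) := by
      have htri : |Real.exp (ψ r) - 1 - C₀ * r ^ (-α) * Real.sin (k₀ * Real.log r + k₁)|
          ≤ |Real.exp (ψ r) - 1 - ψ r|
            + |ψ r - C₀ * r ^ τ * Real.sin (k₀ * Real.log r + k₁) - C₁ * r ^ ν|
            + |C₁ * r ^ ν| := by
        calc |Real.exp (ψ r) - 1 - C₀ * r ^ (-α) * Real.sin (k₀ * Real.log r + k₁)|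
            = |(Real.exp (ψ r) - 1 - ψ r)
                + ((ψ r - C₀ * r ^ τ * Real.sin (k₀ * Real.log r + k₁) - C₁ * r ^ ν)
                + C₁ * r ^ ν)| := by rw [hτeq]; congr 1; ring
          _ ≤ |Real.exp (ψ r) - 1 - ψ r|
                + |(ψ r - C₀ * r ^ τ * Real.sin (k₀ * Real.log r + k₁) - C₁ * r ^ ν)
                + C₁ * r ^ ν| := abs_add_le _ _
          _ ≤ _ := by
                have := abs_add_le (ψ r - C₀ * r ^ τ * Real.sin (k₀ * Real.log r + k₁)
                  - C₁ * r ^ ν) (C₁ * r ^ ν)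
                linarith
      have hb2 : |C₁ * r ^ ν| ≤ |C₁| * r ^ (-(2 * α)) := by
        rw [abs_mul, abs_of_nonneg (Real.rpow_nonneg hr0.le ν)]
        exact mul_le_mul_of_nonneg_left hνb (abs_nonneg _)
      have hEE : |ψ r - C₀ * r ^ τ * Real.sin (k₀ * Real.log r + k₁) - C₁ * r ^ ν|
          ≤ C' * r ^ (-(2 * α)) := by rw [← h2τ]; exact hE
      have hexpand : (D₀ ^ 2 + C' + |C₁|) * r ^ (-(2 * α))
          = D₀ ^ 2 * r ^ (-(2 * α)) + C' * r ^ (-(2 * α)) + |C₁| * r ^ (-(2 * α)) := by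
        ring
      rw [hexpand]
      linarith
    calc A * r ^ (Dr - 5)
          * |Real.exp (ψ r) - 1 - C₀ * r ^ (-α) * Real.sin (k₀ * Real.log r + k₁)|
        ≤ A * r ^ (Dr - 5) * ((D₀ ^ 2 + C' + |C₁|) * r ^ (-(2 * α))) :=
          mul_le_mul_of_nonneg_left hinner hAr.le
      _ = M₂ * (r ^ (Dr - 5) * r ^ (-(2 * α))) := by rw [hM₂def]; ring
      _ = M₂ * r⁻¹ := by rw [hrpow2 r hr0]
  -- antiderivative of the oscillating term
  set G : ℝ → ℝ := fun x => x ^ α * (α * Real.sin (k₀ * Real.log x + k₁)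
      - k₀ * Real.cos (k₀ * Real.log x + k₁)) / (α ^ 2 + k₀ ^ 2) with hGdef
  -- continuity of aux integrands on [b₀, R]
  have hgcont : ∀ R : ℝ, b₀ ≤ R →
      ContinuousOn (fun r : ℝ => A * r ^ (Dr - 5)) (Set.uIcc b₀ R) := by
    intro R hR
    rw [Set.uIcc_of_le hR]
    refine continuousOn_const.mul (ContinuousOn.rpow_const continuousOn_id fun x hx => ?_)
    exact Or.inl (ne_of_gt (lt_of_lt_of_le hb₀pos hx.1))
  have hhcont : ∀ R : ℝ, b₀ ≤ R →
      ContinuousOn (fun r : ℝ => A * C₀ * (r ^ (α - 1) * Real.sin (k₀ * Real.log r + k₁)))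
        (Set.uIcc b₀ R) := by
    intro R hR
    rw [Set.uIcc_of_le hR]
    have hsub : Set.Icc b₀ R ⊆ {x : ℝ | x ≠ 0} := fun x hx =>
      ne_of_gt (lt_of_lt_of_le hb₀pos hx.1)
    refine continuousOn_const.mul (ContinuousOn.mul ?_ ?_)
    · exact ContinuousOn.rpow_const continuousOn_id fun x hx => Or.inl (hsub hx)
    · exact Real.continuous_sin.comp_continuousOn
        ((continuousOn_const.mul (Real.continuousOn_log.mono hsub)).add continuousOn_const)
  have hIpow : ∀ R : ℝ, b₀ ≤ R →
      (∫ r in b₀..R, A * r ^ (Dr - 5))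
        = A * ((R ^ (Dr - 4) - b₀ ^ (Dr - 4)) / (Dr - 4)) := by
    intro R hR
    rw [intervalIntegral.integral_const_mul]
    rw [integral_rpow (Or.inl (by linarith : (-1 : ℝ) < Dr - 5))]
    congr 2 <;> · rw [show Dr - 5 + 1 = Dr - 4 by ring]
  have hIosc : ∀ R : ℝ, b₀ ≤ R →
      (∫ r in b₀..R, A * C₀ * (r ^ (α - 1) * Real.sin (k₀ * Real.log r + k₁)))
        = A * C₀ * (G R - G b₀) := by
    intro R hR
    have hderiv : ∀ x ∈ Set.uIcc b₀ R,
        HasDerivAt (fun x : ℝ => A * C₀ * (x ^ α * (α * Real.sin (k₀ * Real.log x + k₁)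
          - k₀ * Real.cos (k₀ * Real.log x + k₁)) / (α ^ 2 + k₀ ^ 2)))
          (A * C₀ * (x ^ (α - 1) * Real.sin (k₀ * Real.log x + k₁))) x := by
      intro x hx
      rw [Set.uIcc_of_le hR] at hx
      exact (osc_deriv α k₀ k₁ hk₀ (lt_of_lt_of_le hb₀pos hx.1)).const_mul (A * C₀)
    have hint : IntervalIntegrable
        (fun r : ℝ => A * C₀ * (r ^ (α - 1) * Real.sin (k₀ * Real.log r + k₁)))
        volume b₀ R := (hhcont R hR).intervalIntegrable
    rw [intervalIntegral.integral_eq_sub_of_hasDerivAt hderiv hint, hGdef]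
    ring
  set J : ℝ → ℝ := fun R => ∫ r in b₀..R, f r with hJdef
  have hJ1 : ∀ R : ℝ, b₀ ≤ R →
      |J R - A * ((R ^ (Dr - 4) - b₀ ^ (Dr - 4)) / (Dr - 4))| ≤ (M₁ / α) * R ^ α := by
    intro R hR
    have hRpos : (0 : ℝ) < R := lt_of_lt_of_le hb₀pos hR
    have hint_f : IntervalIntegrable f volume b₀ R := hf_int b₀ R hb₀pos.le hRpos.le
    have hint_g : IntervalIntegrable (fun r : ℝ => A * r ^ (Dr - 5)) volume b₀ R :=
      (hgcont R hR).intervalIntegrable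
    have hint_b : IntervalIntegrable (fun r : ℝ => M₁ * r ^ (α - 1)) volume b₀ R := by
      refine ContinuousOn.intervalIntegrable ?_
      rw [Set.uIcc_of_le hR]
      exact continuousOn_const.mul (ContinuousOn.rpow_const continuousOn_id fun x hx =>
        Or.inl (ne_of_gt (lt_of_lt_of_le hb₀pos hx.1)))
    have e1 : J R - A * ((R ^ (Dr - 4) - b₀ ^ (Dr - 4)) / (Dr - 4))
        = ∫ r in b₀..R, (f r - A * r ^ (Dr - 5)) := by
      rw [intervalIntegral.integral_sub hint_f hint_g, hIpow R hR, hJdef]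
    rw [e1]
    calc |∫ r in b₀..R, (f r - A * r ^ (Dr - 5))|
        ≤ ∫ r in b₀..R, |f r - A * r ^ (Dr - 5)| :=
          intervalIntegral.abs_integral_le_integral_abs hR
      _ ≤ ∫ r in b₀..R, M₁ * r ^ (α - 1) :=
          intervalIntegral.integral_mono_on hR (hint_f.sub hint_g).abs hint_b
            fun x hx => hlev1 x hx.1
      _ = M₁ * ((R ^ α - b₀ ^ α) / α) := by
          rw [intervalIntegral.integral_const_mul,
            integral_rpow (Or.inl (by linarith : (-1 : ℝ) < α - 1))]
          congr 2 <;> · rw [show α - 1 + 1 = α by ring]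
      _ ≤ (M₁ / α) * R ^ α := by
          have hb : (0 : ℝ) ≤ b₀ ^ α := Real.rpow_nonneg hb₀pos.le _
          rw [show (M₁ / α) * R ^ α = M₁ * (R ^ α / α) by ring]
          exact mul_le_mul_of_nonneg_left
            ((div_le_div_iff_of_pos_right hα).mpr (by linarith)) hM₁.le
  have hJ2 : ∀ R : ℝ, b₀ ≤ R →
      |J R - A * ((R ^ (Dr - 4) - b₀ ^ (Dr - 4)) / (Dr - 4)) - A * C₀ * (G R - G b₀)|
        ≤ M₂ * Real.log R := by
    intro R hR
    have hRpos : (0 : ℝ) < R := lt_of_lt_of_le hb₀pos hR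
    have hR1 : (1 : ℝ) ≤ R := le_trans hb₀1 hR
    have hint_f : IntervalIntegrable f volume b₀ R := hf_int b₀ R hb₀pos.le hRpos.le
    have hint_g : IntervalIntegrable (fun r : ℝ => A * r ^ (Dr - 5)) volume b₀ R :=
      (hgcont R hR).intervalIntegrable
    have hint_h : IntervalIntegrable
        (fun r : ℝ => A * C₀ * (r ^ (α - 1) * Real.sin (k₀ * Real.log r + k₁)))
        volume b₀ R := (hhcont R hR).intervalIntegrable
    have hint_b : IntervalIntegrable (fun r : ℝ => M₂ * r⁻¹) volume b₀ R := by
      refine ContinuousOn.intervalIntegrable ?_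
      rw [Set.uIcc_of_le hR]
      exact continuousOn_const.mul (ContinuousOn.inv₀ continuousOn_id fun x hx =>
        ne_of_gt (lt_of_lt_of_le hb₀pos hx.1))
    have e1 : J R - A * ((R ^ (Dr - 4) - b₀ ^ (Dr - 4)) / (Dr - 4)) - A * C₀ * (G R - G b₀)
        = ∫ r in b₀..R, (f r - A * r ^ (Dr - 5)
            - A * C₀ * (r ^ (α - 1) * Real.sin (k₀ * Real.log r + k₁))) := by
      rw [intervalIntegral.integral_sub (hint_f.sub hint_g) hint_h,
        intervalIntegral.integral_sub hint_f hint_g, hIpow R hR, hIosc R hR, hJdef]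
    rw [e1]
    calc |∫ r in b₀..R, (f r - A * r ^ (Dr - 5)
            - A * C₀ * (r ^ (α - 1) * Real.sin (k₀ * Real.log r + k₁)))|
        ≤ ∫ r in b₀..R, |f r - A * r ^ (Dr - 5)
            - A * C₀ * (r ^ (α - 1) * Real.sin (k₀ * Real.log r + k₁))| :=
          intervalIntegral.abs_integral_le_integral_abs hR
      _ ≤ ∫ r in b₀..R, M₂ * r⁻¹ :=
          intervalIntegral.integral_mono_on hR ((hint_f.sub hint_g).sub hint_h).abs hint_b
            fun x hx => hlev2 x hx.1
      _ = M₂ * Real.log (R / b₀) := by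
          rw [intervalIntegral.integral_const_mul, integral_inv]
          rw [Set.uIcc_of_le hR]
          rintro ⟨h0, -⟩
          linarith
      _ ≤ M₂ * Real.log R := by
          refine mul_le_mul_of_nonneg_left ?_ hM₂.le
          rw [Real.log_div hRpos.ne' hb₀pos.ne']
          linarith [Real.log_nonneg hb₀1]
  have hsplit : ∀ R : ℝ, b₀ ≤ R →
      (∫ r in (0 : ℝ)..R, f r) = (∫ r in (0 : ℝ)..b₀, f r) + J R := by
    intro R hR
    rw [hJdef]
    exact (intervalIntegral.integral_add_adjacent_intervals
      (hf_int 0 b₀ le_rfl hb₀pos.le) (hf_int b₀ R hb₀pos.le (by linarith))).symm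
  set c₀ : ℝ := (∫ r in (0 : ℝ)..b₀, f r) - A * b₀ ^ (Dr - 4) / (Dr - 4) with hc₀def
  have hFdec : ∀ R : ℝ, b₀ ≤ R → F R - L
      = R ^ ((4 : ℝ) - Dr)
        * (c₀ + (J R - A * ((R ^ (Dr - 4) - b₀ ^ (Dr - 4)) / (Dr - 4)))) := by
    intro R hR
    have hRpos : (0 : ℝ) < R := lt_of_lt_of_le hb₀pos hR
    have hRR : R ^ ((4 : ℝ) - Dr) * R ^ (Dr - 4) = 1 := by
      rw [← Real.rpow_add hRpos, show (4 : ℝ) - Dr + (Dr - 4) = 0 by ring, Real.rpow_zero]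
    have expand : R ^ ((4 : ℝ) - Dr)
          * (c₀ + (J R - A * ((R ^ (Dr - 4) - b₀ ^ (Dr - 4)) / (Dr - 4))))
        = R ^ ((4 : ℝ) - Dr) * ((∫ r in (0 : ℝ)..b₀, f r) + J R)
          - (A / (Dr - 4)) * (R ^ ((4 : ℝ) - Dr) * R ^ (Dr - 4)) := by
      rw [hc₀def]; ring
    rw [expand, hRR, mul_one, ← hLA, hFdef]
    simp only []
    rw [hsplit R hR]
  set Ct : ℝ := |c₀| + M₁ / α with hCtdef
  have hCt : 0 ≤ Ct := by
    have := abs_nonneg c₀; have := (div_pos hM₁ hα).le; rw [hCtdef]; linarith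
  have hFbound : ∀ R : ℝ, b₀ ≤ R → |F R - L| ≤ Ct * R ^ (-α) := by
    intro R hR
    have hRpos : (0 : ℝ) < R := lt_of_lt_of_le hb₀pos hR
    have hR1 : (1 : ℝ) ≤ R := le_trans hb₀1 hR
    have h2α : ((4 : ℝ) - Dr) = -(2 * α) := by rw [hαdef]; ring
    have hmono : R ^ (-(2 * α)) ≤ R ^ (-α) :=
      Real.rpow_le_rpow_of_exponent_le hR1 (by linarith)
    have hcomb : R ^ (-(2 * α)) * R ^ α = R ^ (-α) := by
      rw [← Real.rpow_add hRpos]; congr 1; ring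
    rw [hFdec R hR, h2α, abs_mul, abs_of_nonneg (Real.rpow_nonneg hRpos.le _)]
    calc R ^ (-(2 * α)) * |c₀ + (J R - A * ((R ^ (Dr - 4) - b₀ ^ (Dr - 4)) / (Dr - 4)))|
        ≤ R ^ (-(2 * α)) * (|c₀| + (M₁ / α) * R ^ α) := by
          refine mul_le_mul_of_nonneg_left ?_ (Real.rpow_nonneg hRpos.le _)
          calc |c₀ + (J R - A * ((R ^ (Dr - 4) - b₀ ^ (Dr - 4)) / (Dr - 4)))|
              ≤ |c₀| + |J R - A * ((R ^ (Dr - 4) - b₀ ^ (Dr - 4)) / (Dr - 4))| := abs_add_le _ _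
            _ ≤ |c₀| + (M₁ / α) * R ^ α := by linarith [hJ1 R hR]
      _ = |c₀| * R ^ (-(2 * α)) + (M₁ / α) * (R ^ (-(2 * α)) * R ^ α) := by ring
      _ ≤ |c₀| * R ^ (-α) + (M₁ / α) * R ^ (-α) := by
          rw [hcomb]
          have := mul_le_mul_of_nonneg_left hmono (abs_nonneg c₀)
          linarith
      _ = Ct * R ^ (-α) := by rw [hCtdef]; ring
  -- part 1 : tendsto
  have htend : Filter.Tendsto F Filter.atTop (nhds L) := by
    have h0 : Filter.Tendsto (fun R => F R - L) Filter.atTop (nhds 0) := by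
      refine squeeze_zero_norm' (a := fun R : ℝ => Ct * R ^ (-α)) ?_ ?_
      · filter_upwards [eventually_ge_atTop b₀] with R hR
        rw [Real.norm_eq_abs]
        exact hFbound R hR
      · have h1 := (tendsto_rpow_neg_atTop hα).const_mul Ct
        simpa using h1
    have h2 := h0.add_const L
    simpa using h2
  -- part 2 : frequently
  have hfreq : ∀ a : ℝ, ∃ R : ℝ, a ≤ R ∧ 1 ≤ R ∧ L < F R := by
    have hθexists : ∃ θs : ℝ, 0 < C₀ * (α * Real.sin θs - k₀ * Real.cos θs) := by
      rcases (mul_ne_zero hC₀ hk₀).lt_or_gt with hlt | hgt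
      · refine ⟨0, ?_⟩
        rw [Real.sin_zero, Real.cos_zero]
        nlinarith [hlt]
      · refine ⟨Real.pi, ?_⟩
        rw [Real.sin_pi, Real.cos_pi]
        nlinarith [hgt]
    obtain ⟨θs, hcs⟩ := hθexists
    set cs : ℝ := C₀ * (α * Real.sin θs - k₀ * Real.cos θs) with hcsdef
    set c₁ : ℝ := A * cs / (α ^ 2 + k₀ ^ 2) with hc₁def
    have hc₁ : 0 < c₁ := div_pos (mul_pos hA hcs) (by positivity)
    set c₂ : ℝ := c₀ - A * C₀ * G b₀ with hc₂def
    have hev : ∀ᶠ R in Filter.atTop, |c₂| + M₂ * Real.log R < c₁ * R ^ α := by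
      have hlo : (fun R : ℝ => |c₂| + M₂ * Real.log R) =o[Filter.atTop]
          fun R : ℝ => R ^ α := by
        refine Asymptotics.IsLittleO.add ?_ ?_
        · refine Asymptotics.isLittleO_const_left.mpr (Or.inr ?_)
          exact tendsto_abs_atTop_atTop.comp (tendsto_rpow_atTop hα)
        · exact (isLittleO_log_rpow_atTop hα).const_mul_left M₂
      have h2 := hlo.def (half_pos hc₁)
      filter_upwards [h2, eventually_ge_atTop (1 : ℝ)] with R hR2 hR1
      have hRα : 0 < R ^ α := Real.rpow_pos_of_pos (by linarith) _
      rw [Real.norm_eq_abs, Real.norm_eq_abs, abs_of_pos hRα] at hR2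
      have h3 : |c₂| + M₂ * Real.log R ≤ |(|c₂| + M₂ * Real.log R)| := le_abs_self _
      nlinarith [hRα, hc₁]
    rw [Filter.eventually_atTop] at hev
    obtain ⟨T₁, hT₁⟩ := hev
    intro a
    set W : ℝ := max (max a b₀) (max T₁ 1) with hWdef
    have hW0 : 0 < W :=
      lt_of_lt_of_le one_pos (le_trans (le_max_right T₁ 1) (le_max_right _ _))
    obtain ⟨t, hTt, n, hn⟩ := exists_resonant k₀ θs k₁ hk₀ (Real.log W)
    set R : ℝ := Real.exp t with hRdef
    have hWR : W ≤ R := by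
      calc W = Real.exp (Real.log W) := (Real.exp_log hW0).symm
        _ ≤ Real.exp t := Real.exp_le_exp.mpr hTt
    have hRb₀ : b₀ ≤ R := le_trans (le_trans (le_max_right a b₀) (le_max_left _ _)) hWR
    have hRa : a ≤ R := le_trans (le_trans (le_max_left a b₀) (le_max_left _ _)) hWR
    have hRT₁ : T₁ ≤ R := le_trans (le_trans (le_max_left T₁ 1) (le_max_right _ _)) hWR
    have hR1 : (1 : ℝ) ≤ R := le_trans (le_trans (le_max_right T₁ 1) (le_max_right _ _)) hWR
    have hRpos : (0 : ℝ) < R := lt_of_lt_of_le one_pos hR1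
    have hθR : k₀ * Real.log R + k₁ = θs + n * (2 * Real.pi) := by
      rw [hRdef, Real.log_exp]; exact hn
    have hsinR : Real.sin (k₀ * Real.log R + k₁) = Real.sin θs := by
      rw [hθR]; exact Real.sin_add_int_mul_two_pi θs n
    have hcosR : Real.cos (k₀ * Real.log R + k₁) = Real.cos θs := by
      rw [hθR]; exact Real.cos_add_int_mul_two_pi θs n
    have hGR : A * C₀ * G R = c₁ * R ^ α := by
      rw [hGdef]
      simp only []
      rw [hsinR, hcosR, hc₁def, hcsdef]
      ring
    have hdec := hFdec R hRb₀
    have h2 := hJ2 R hRb₀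
    have e3 : c₀ + (J R - A * ((R ^ (Dr - 4) - b₀ ^ (Dr - 4)) / (Dr - 4)))
        = c₂ + (J R - A * ((R ^ (Dr - 4) - b₀ ^ (Dr - 4)) / (Dr - 4))
            - A * C₀ * (G R - G b₀)) + c₁ * R ^ α := by
      rw [hc₂def, ← hGR]; ring
    have habs := abs_le.mp h2
    have hT := hT₁ R hRT₁
    have hpos_inner :
        0 < c₀ + (J R - A * ((R ^ (Dr - 4) - b₀ ^ (Dr - 4)) / (Dr - 4))) := by
      rw [e3]
      have h4 := neg_abs_le c₂
      linarith [habs.1]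
    have hfin : 0 < F R - L := by
      rw [hdec]
      exact mul_pos (Real.rpow_pos_of_pos hRpos _) hpos_inner
    exact ⟨R, hRa, hR1, by linarith⟩
  -- part 3 : bddAbove
  have hbdd : BddAbove (F '' Set.Ioi 0) := by
    obtain ⟨Mφ, hMφ⟩ := IsCompact.exists_bound_of_continuousOn
      (isCompact_Icc : IsCompact (Set.Icc (0 : ℝ) b₀))
      (Real.continuous_exp.comp_continuousOn
        (hφ_cont.mono fun x (hx : x ∈ Set.Icc (0 : ℝ) b₀) => hx.1))
    set Mp : ℝ := max Mφ 0 with hMpdef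
    have hMp : 0 ≤ Mp := le_max_right _ _
    have hbound1 : ∀ R : ℝ, 0 < R → R ≤ b₀ → F R ≤ Mp * b₀ ^ (4 : ℝ) := by
      intro R h0 hRb
      have hint_f := hf_int 0 R le_rfl h0.le
      have hint_g : IntervalIntegrable (fun r : ℝ => Mp * r ^ (d - 1)) volume 0 R :=
        (continuous_const.mul (continuous_pow _)).intervalIntegrable _ _
      have hIb : (∫ r in (0 : ℝ)..R, f r) ≤ ∫ r in (0 : ℝ)..R, Mp * r ^ (d - 1) := by
        refine intervalIntegral.integral_mono_on h0.le hint_f hint_g ?_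
        intro x hx
        have hx0 : (0 : ℝ) ≤ x := hx.1
        have h1 : Real.exp (φ x) ≤ Mp := by
          have h2 := hMφ x ⟨hx0, le_trans hx.2 hRb⟩
          rw [Real.norm_eq_abs] at h2
          exact le_trans (le_trans (le_abs_self _) h2) (le_max_left _ _)
        calc f x = x ^ (d - 1) * Real.exp (φ x) := rfl
          _ ≤ x ^ (d - 1) * Mp := mul_le_mul_of_nonneg_left h1 (pow_nonneg hx0 _)
          _ = Mp * x ^ (d - 1) := mul_comm _ _
      have hInt2 : (∫ r in (0 : ℝ)..R, Mp * r ^ (d - 1)) = Mp * (R ^ d / d) := by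
        rw [intervalIntegral.integral_const_mul, integral_pow,
          show d - 1 + 1 = d from by omega, zero_pow (by omega : d ≠ 0),
          Nat.cast_sub (by omega : 1 ≤ d), Nat.cast_one]
        ring
      have hRd : (R : ℝ) ^ d = R ^ (Dr : ℝ) := by
        rw [hDrdef, Real.rpow_natCast]
      have hR4 : R ^ ((4 : ℝ) - Dr) * R ^ (Dr : ℝ) = R ^ (4 : ℝ) := by
        rw [← Real.rpow_add h0]; congr 1; ring
      have hd0 : (0 : ℝ) < (d : ℝ) := by rw [← hDrdef]; linarith
      have hstep : F R ≤ R ^ ((4 : ℝ) - Dr) * (Mp * (R ^ d / d)) := by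
        rw [hFdef]
        simp only []
        rw [← hInt2]
        exact mul_le_mul_of_nonneg_left hIb (Real.rpow_nonneg h0.le _)
      have heq : R ^ ((4 : ℝ) - Dr) * (Mp * (R ^ d / d))
          = (Mp / d) * R ^ (4 : ℝ) := by
        rw [hRd, ← hR4]; ring
      have h44 : R ^ (4 : ℝ) ≤ b₀ ^ (4 : ℝ) :=
        Real.rpow_le_rpow h0.le hRb (by norm_num)
      have hfinal : (Mp / d) * R ^ (4 : ℝ) ≤ Mp * b₀ ^ (4 : ℝ) := by
        have hd1 : (1 : ℝ) ≤ (d : ℝ) := by rw [← hDrdef]; linarith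
        have h5 : Mp / d ≤ Mp := by
          rw [div_le_iff₀ hd0]
          nlinarith [hMp]
        have h6 : (0 : ℝ) ≤ Mp / d := div_nonneg hMp hd0.le
        calc (Mp / d) * R ^ (4 : ℝ) ≤ (Mp / d) * b₀ ^ (4 : ℝ) :=
              mul_le_mul_of_nonneg_left h44 h6
          _ ≤ Mp * b₀ ^ (4 : ℝ) :=
              mul_le_mul_of_nonneg_right h5 (Real.rpow_nonneg hb₀pos.le _)
      calc F R ≤ R ^ ((4 : ℝ) - Dr) * (Mp * (R ^ d / d)) := hstep
        _ = (Mp / d) * R ^ (4 : ℝ) := heq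
        _ ≤ Mp * b₀ ^ (4 : ℝ) := hfinal
    have hbound2 : ∀ R : ℝ, b₀ ≤ R → F R ≤ L + Ct := by
      intro R hR
      have h := (abs_le.mp (hFbound R hR)).2
      have h1 : R ^ (-α) ≤ 1 :=
        Real.rpow_le_one_of_one_le_of_nonpos (le_trans hb₀1 hR) (by linarith)
      have h2 : Ct * R ^ (-α) ≤ Ct := mul_le_of_le_one_right hCt h1
      linarith
    refine ⟨max (Mp * b₀ ^ (4 : ℝ)) (L + Ct), ?_⟩
    rintro x ⟨R, hR, rfl⟩
    rcases le_or_gt R b₀ with h | h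
    · exact le_trans (hbound1 R hR h) (le_max_left _ _)
    · exact le_trans (hbound2 R h.le) (le_max_right _ _)
  refine ⟨htend, Filter.frequently_atTop.mpr fun a => ?_, hbdd, ?_⟩
  · obtain ⟨R, hRa, _, hRF⟩ := hfreq a
    exact ⟨R, hRa, hRF⟩
  · obtain ⟨R, _, hR1, hRF⟩ := hfreq 1
    exact lt_of_lt_of_le hRF (le_csSup hbdd ⟨R, by simp; linarith, rfl⟩)
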